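/- arXiv:1210.6170 — 5 statements merged into one kernel-verified Lean document; each statement's English description precedes it below -/
import Mathlib

section
/- Let n ∈ ℕ, σ > 0, and c, x, t ∈ ℝⁿ. Then exp(-‖x-t‖²/σ²) = exp(-‖x-c‖²/σ²)·exp(-‖t-c‖²/σ²)·∑_{k=0}^∞ ((2/σ²)^k / k!) ∑_{|α|=k} C^k_α (x-c)^α (t-c)^α, where the series converges absolutely. -/
open Finset

private noncomputable instance fiberFintype (n k : ℕ) :
    Fintype {α : Fin n → ℕ // ∑ i, α i = k} :=
  Fintype.ofFinset (Finset.piAntidiag Finset.univ k) (fun α => by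
    simp [Finset.mem_piAntidiag]; exact Iff.rfl)

/-- tsum over the fiber equals the finset sum over `piAntidiag`. -/
private lemma fiber_tsum (n k : ℕ) (h : (Fin n → ℕ) → ℝ) :
    ∑' α : {α : Fin n → ℕ // ∑ i, α i = k}, h α.1
      = ∑ α ∈ Finset.piAntidiag Finset.univ k, h α := by
  rw [← Finset.tsum_subtype]
  exact Equiv.tsum_eq (Equiv.subtypeEquivRight fun α => by simp)
    (fun β : {α // α ∈ Finset.piAntidiag Finset.univ k} => h β.1)

/-- Multinomial theorem in fiber-tsum form. -/
private lemma fiber_multinomial (n k : ℕ) (u v : Fin n → ℝ) :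
    ∑' α : {α : Fin n → ℕ // ∑ i, α i = k},
        (Nat.multinomial Finset.univ α.1 : ℝ) *
          ((∏ i, u i ^ α.1 i) * ∏ i, v i ^ α.1 i)
      = (∑ i, u i * v i) ^ k := by
  refine (fiber_tsum n k (fun β => (Nat.multinomial Finset.univ β : ℝ) *
    ((∏ i, u i ^ β i) * ∏ i, v i ^ β i))).trans ?_
  rw [Finset.sum_pow_eq_sum_piAntidiag]
  refine Finset.sum_congr rfl fun α _ => ?_
  rw [← Finset.prod_mul_distrib]
  simp [mul_pow]

/-- The full function over all multi-indices. -/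
private noncomputable def F (n : ℕ) (a : ℝ) (u v : Fin n → ℝ) (α : Fin n → ℕ) : ℝ :=
  a ^ (∑ i, α i) / ((∑ i, α i).factorial : ℝ) *
    (Nat.multinomial Finset.univ α : ℝ) *
      ((∏ i, u i ^ α i) * ∏ i, v i ^ α i)

private lemma fiber_tsum_F (n : ℕ) (a : ℝ) (u v : Fin n → ℝ) (k : ℕ) :
    ∑' α : {α : Fin n → ℕ // ∑ i, α i = k}, F n a u v α.1
      = a ^ k / (k.factorial : ℝ) *
          ∑' α : {α : Fin n → ℕ // ∑ i, α i = k},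
            (Nat.multinomial Finset.univ α.1 : ℝ) *
              ((∏ i, u i ^ α.1 i) * ∏ i, v i ^ α.1 i) := by
  refine (fiber_tsum n k (F n a u v)).trans ?_
  rw [fiber_tsum n k (fun β => (Nat.multinomial Finset.univ β : ℝ) *
    ((∏ i, u i ^ β i) * ∏ i, v i ^ β i))]
  rw [Finset.mul_sum]
  refine Finset.sum_congr rfl fun α hα => ?_
  rw [Finset.mem_piAntidiag] at hα
  have hk : ∑ i, α i = k := hα.1
  rw [F, hk, mul_assoc]

private lemma fiber_tsum_F' (n : ℕ) (a : ℝ) (u v : Fin n → ℝ) (k : ℕ) :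
    ∑' α : {α : Fin n → ℕ // ∑ i, α i = k}, F n a u v α.1
      = (a * ∑ i, u i * v i) ^ k / (k.factorial : ℝ) := by
  rw [fiber_tsum_F, fiber_multinomial, mul_pow]
  ring

private lemma preimage_tsum (n : ℕ) (a : ℝ) (u v : Fin n → ℝ) (k : ℕ) :
    (∑' y : ↥((fun α : Fin n → ℕ => ∑ i, α i) ⁻¹' {k}), F n a u v (y : Fin n → ℕ))
      = ∑' α : {α : Fin n → ℕ // ∑ i, α i = k}, F n a u v α.1 :=
  Equiv.tsum_eq (Equiv.subtypeEquivRight fun α => by simp [Set.mem_preimage])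
    (fun β : {α : Fin n → ℕ // ∑ i, α i = k} => F n a u v β.1)

private lemma summable_F_nonneg (n : ℕ) (a : ℝ) (ha : 0 ≤ a) (u v : Fin n → ℝ)
    (hu : ∀ i, 0 ≤ u i) (hv : ∀ i, 0 ≤ v i) : Summable (F n a u v) := by
  have hF0 : ∀ α, 0 ≤ F n a u v α := by
    intro α
    refine mul_nonneg (mul_nonneg (div_nonneg (pow_nonneg ha _) (by positivity)) (by positivity)) ?_
    exact mul_nonneg (Finset.prod_nonneg fun i _ => pow_nonneg (hu i) _)
      (Finset.prod_nonneg fun i _ => pow_nonneg (hv i) _)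
  refine ((Equiv.sigmaFiberEquiv (fun α : Fin n → ℕ => ∑ i, α i)).summable_iff).mp ?_
  refine (summable_sigma_of_nonneg fun _ => hF0 _).mpr ⟨fun k => Summable.of_finite, ?_⟩
  have heq : (fun k : ℕ => ∑' y : ↥((fun α : Fin n → ℕ => ∑ i, α i) ⁻¹' {k}),
        F n a u v (y : Fin n → ℕ))
      = fun k : ℕ => (a * ∑ i, u i * v i) ^ k / (k.factorial : ℝ) := by
    funext k
    rw [preimage_tsum, fiber_tsum_F']
  exact heq ▸ Real.summable_pow_div_factorial _

private lemma summable_F (n : ℕ) (a : ℝ) (u v : Fin n → ℝ) : Summable (F n a u v) := by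
  rw [← summable_abs_iff]
  have heq : (fun α => |F n a u v α|) = F n |a| (fun i => |u i|) (fun i => |v i|) := by
    funext α
    simp only [F, abs_mul, abs_div, abs_pow, Finset.abs_prod, Nat.abs_cast]
  rw [heq]
  exact summable_F_nonneg n |a| (abs_nonneg a) _ _ (fun i => abs_nonneg _) (fun i => abs_nonneg _)

private lemma tsum_F (n : ℕ) (a : ℝ) (u v : Fin n → ℝ) :
    Real.exp (a * ∑ i, u i * v i)
      = ∑' k : ℕ, a ^ k / (k.factorial : ℝ) *
          ∑' α : {α : Fin n → ℕ // ∑ i, α i = k},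
            (Nat.multinomial Finset.univ α.1 : ℝ) *
              ((∏ i, u i ^ α.1 i) * ∏ i, v i ^ α.1 i) := by
  have hsum := summable_F n a u v
  have hfib := hsum.hasSum.tsum_fiberwise (fun α => ∑ i, α i)
  simp only [preimage_tsum] at hfib
  have h2 : HasSum (fun k : ℕ => (a * ∑ i, u i * v i) ^ k / (k.factorial : ℝ))
      (∑' α, F n a u v α) := by
    have heq : (fun k : ℕ => ∑' α : {α : Fin n → ℕ // ∑ i, α i = k}, F n a u v α.1)
        = fun k : ℕ => (a * ∑ i, u i * v i) ^ k / (k.factorial : ℝ) := by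
      funext k; rw [fiber_tsum_F']
    rwa [heq] at hfib
  have h3 : Real.exp (a * ∑ i, u i * v i)
      = ∑' k : ℕ, (a * ∑ i, u i * v i) ^ k / (k.factorial : ℝ) := by
    rw [Real.exp_eq_exp_ℝ, NormedSpace.exp_eq_tsum_div]
  rw [h3, h2.tsum_eq]
  refine hfib.tsum_eq.symm.trans (tsum_congr fun k => ?_)
  rw [fiber_tsum_F]

/-- For `n ∈ ℕ`, `σ > 0`, `c, x, t ∈ ℝⁿ`,
`exp(-‖x-t‖²/σ²) = exp(-‖x-c‖²/σ²)·exp(-‖t-c‖²/σ²)·∑_{k=0}^∞ ((2/σ²)^k/k!) ∑_{|α|=k} C^k_α (x-c)^α (t-c)^α`,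
the series converging absolutely. -/
theorem gaussian_kernel_expansion (n : ℕ) (σ : ℝ) (hσ : 0 < σ)
    (c x t : EuclideanSpace ℝ (Fin n)) :
    Summable (fun α : Fin n → ℕ =>
      (2 / σ ^ 2) ^ (∑ i, α i) / ((∑ i, α i).factorial : ℝ) *
        (Nat.multinomial Finset.univ α : ℝ) *
        ((∏ i, (x i - c i) ^ α i) * ∏ i, (t i - c i) ^ α i)) ∧
    Real.exp (-‖x - t‖ ^ 2 / σ ^ 2) =
      Real.exp (-‖x - c‖ ^ 2 / σ ^ 2) * Real.exp (-‖t - c‖ ^ 2 / σ ^ 2) *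
        ∑' k : ℕ, (2 / σ ^ 2) ^ k / (k.factorial : ℝ) *
          ∑' α : {α : Fin n → ℕ // ∑ i, α i = k},
            (Nat.multinomial Finset.univ α.1 : ℝ) *
              ((∏ i, (x i - c i) ^ α.1 i) * ∏ i, (t i - c i) ^ α.1 i) := by
  have hσ2 : (σ : ℝ) ^ 2 ≠ 0 := by positivity
  constructor
  · exact summable_F n (2 / σ ^ 2) (fun i => x i - c i) (fun i => t i - c i)
  · have hts : (∑' k : ℕ, (2 / σ ^ 2) ^ k / (k.factorial : ℝ) *
          ∑' α : {α : Fin n → ℕ // ∑ i, α i = k},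
            (Nat.multinomial Finset.univ α.1 : ℝ) *
              ((∏ i, (x i - c i) ^ α.1 i) * ∏ i, (t i - c i) ^ α.1 i))
        = Real.exp ((2 / σ ^ 2) * ∑ i, (x i - c i) * (t i - c i)) :=
      (tsum_F n (2 / σ ^ 2) (fun i => x i - c i) (fun i => t i - c i)).symm
    rw [hts, ← Real.exp_add, ← Real.exp_add]
    have hinner : (inner ℝ (x - c) (t - c) : ℝ) = ∑ i, (x i - c i) * (t i - c i) := by
      rw [PiLp.inner_apply]
      simp [RCLike.inner_apply, mul_comm]
    have hnorm : ‖x - t‖ ^ 2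
        = ‖x - c‖ ^ 2 - 2 * (∑ i, (x i - c i) * (t i - c i)) + ‖t - c‖ ^ 2 := by
      rw [← sub_sub_sub_cancel_right x t c, norm_sub_sq_real, hinner]
    congr 1
    rw [hnorm]
    field_simp
    ring
end

section
/- Let n ∈ ℕ, σ > 0, c ∈ ℝⁿ, and X ⊆ ℝⁿ. For every x, t ∈ X, the family {φ_{α,c}(x)·φ_{α,c}(t)}_{α ∈ (ℕ∪{0})ⁿ} is absolutely summable with sum ∑_{k=0}^∞ ∑_{|α|=k} φ_{α,c}(x) φ_{α,c}(t) = exp(-‖x-t‖²/σ²). -/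
set_option maxHeartbeats 1000000
open Finset

lemma hasSum_exp_single (a : ℝ) :
    HasSum (fun m : ℕ => a ^ m / (m.factorial : ℝ)) (Real.exp a) := by
  have h := (Real.summable_pow_div_factorial a).hasSum
  have : ∑' m : ℕ, a ^ m / (m.factorial : ℝ) = Real.exp a := by
    rw [Real.exp_eq_exp_ℝ, NormedSpace.exp_eq_tsum_div]
  rwa [this] at h

lemma hasSum_pi_exp : ∀ (n : ℕ) (v : Fin n → ℝ),
    HasSum (fun α : Fin n → ℕ => ∏ i, v i ^ α i / ((α i).factorial : ℝ))
      (Real.exp (∑ i, v i)) := by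
  intro n
  induction n with
  | zero =>
    intro v
    have : (fun α : Fin 0 → ℕ => ∏ i, v i ^ α i / ((α i).factorial : ℝ)) = fun _ => 1 := by
      funext α; simp
    rw [this]
    simpa using hasSum_fintype (fun _ : Fin 0 → ℕ => (1 : ℝ))
  | succ n ih =>
    intro v
    have h0 := hasSum_exp_single (v 0)
    have hg := ih (fun i => v i.succ)
    have hga := ih (fun i => |v i.succ|)
    -- norm summability
    have hn1 : Summable fun m : ℕ => ‖v 0 ^ m / (m.factorial : ℝ)‖ := by
      have := (hasSum_exp_single |v 0|).summable
      convert this using 2 with m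
      rw [Real.norm_eq_abs, abs_div, abs_pow, Nat.abs_cast]
    have hn2 : Summable fun α : Fin n → ℕ =>
        ‖∏ i, v i.succ ^ α i / ((α i).factorial : ℝ)‖ := by
      have := hga.summable
      convert this using 2 with α
      rw [Real.norm_eq_abs, Finset.abs_prod]
      exact Finset.prod_congr rfl fun i _ => by
        rw [abs_div, abs_pow, Nat.abs_cast]
    have hs := summable_mul_of_summable_norm hn1 hn2
    have hmul := h0.mul hg hs
    have key : (fun α : Fin (n+1) → ℕ => ∏ i, v i ^ α i / ((α i).factorial : ℝ))
        ∘ (Fin.consEquiv (fun _ : Fin (n+1) => ℕ)) = fun p : ℕ × (Fin n → ℕ) =>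
          (v 0 ^ p.1 / (p.1.factorial : ℝ)) *
            ∏ i, v i.succ ^ p.2 i / ((p.2 i).factorial : ℝ) := by
      funext p
      simp [Fin.prod_univ_succ]
      rw [div_mul_div_comm]
    have hsum : Real.exp (∑ i : Fin (n+1), v i)
        = Real.exp (v 0) * Real.exp (∑ i : Fin n, v i.succ) := by
      rw [Fin.sum_univ_succ, Real.exp_add]
    rw [← Equiv.hasSum_iff (Fin.consEquiv (fun _ : Fin (n+1) => ℕ)), key, hsum]
    exact hmul

/-- The function `φ_{α,c}(x) = √((2/σ²)^k C^k_α / k!)·e^{-‖x-c‖²/σ²}·(x-c)^α` where `k = |α|`. -/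
noncomputable def phiFn (n : ℕ) (σ : ℝ) (c : EuclideanSpace ℝ (Fin n)) (α : Fin n → ℕ)
    (x : EuclideanSpace ℝ (Fin n)) : ℝ :=
  Real.sqrt ((2 / σ ^ 2) ^ (∑ i, α i) * (Nat.multinomial Finset.univ α : ℝ) /
      ((∑ i, α i).factorial : ℝ)) *
    Real.exp (-‖x - c‖ ^ 2 / σ ^ 2) * ∏ i, (x i - c i) ^ α i

/-- For every `x, t ∈ X`, the family `{φ_{α,c}(x)·φ_{α,c}(t)}_α` is absolutely
summable with `∑_{k=0}^∞ ∑_{|α|=k} φ_{α,c}(x) φ_{α,c}(t) = exp(-‖x-t‖²/σ²)`. -/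
theorem phi_family_summable_sum_eq_gaussian (n : ℕ) (σ : ℝ) (hσ : 0 < σ)
    (c : EuclideanSpace ℝ (Fin n)) (X : Set (EuclideanSpace ℝ (Fin n)))
    (x t : EuclideanSpace ℝ (Fin n)) (hx : x ∈ X) (ht : t ∈ X) :
    Summable (fun α : Fin n → ℕ => phiFn n σ c α x * phiFn n σ c α t) ∧
    (∑' k : ℕ, ∑' α : {α : Fin n → ℕ // ∑ i, α i = k}, phiFn n σ c α.1 x * phiFn n σ c α.1 t)
      = Real.exp (-‖x - t‖ ^ 2 / σ ^ 2) := by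
  have hσ2 : (σ : ℝ) ^ 2 ≠ 0 := by positivity
  set u : Fin n → ℝ := fun i => (x i - c i) * (t i - c i) with hu
  set v : Fin n → ℝ := fun i => 2 / σ ^ 2 * u i with hv
  set E : ℝ := Real.exp (-‖x - c‖ ^ 2 / σ ^ 2) * Real.exp (-‖t - c‖ ^ 2 / σ ^ 2) with hE
  have hpt : ∀ α : Fin n → ℕ, phiFn n σ c α x * phiFn n σ c α t
      = E * ∏ i, v i ^ α i / ((α i).factorial : ℝ) := by
    intro α
    have hP : (∏ i, ((α i).factorial : ℝ)) ≠ 0 := by positivity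
    have hK : (((∑ i, α i).factorial : ℕ) : ℝ) ≠ 0 := by positivity
    have hM : (Nat.multinomial Finset.univ α : ℝ) * (∏ i, ((α i).factorial : ℝ))
        = (((∑ i, α i).factorial : ℕ) : ℝ) := by
      rw [mul_comm]
      exact_mod_cast Nat.multinomial_spec Finset.univ α
    have hA0 : (0 : ℝ) ≤ (2 / σ ^ 2) ^ (∑ i, α i) * (Nat.multinomial Finset.univ α : ℝ) /
        ((∑ i, α i).factorial : ℝ) := by positivity
    have hAs := Real.mul_self_sqrt hA0
    have hA2 : (2 / σ ^ 2) ^ (∑ i, α i) * (Nat.multinomial Finset.univ α : ℝ) /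
        ((∑ i, α i).factorial : ℝ)
        = (2 / σ ^ 2) ^ (∑ i, α i) / ∏ i, ((α i).factorial : ℝ) := by
      rw [div_eq_div_iff hK hP]
      linear_combination (2 / σ ^ 2) ^ (∑ i, α i) * hM
    have hPx : (∏ i, (x i - c i) ^ α i) * (∏ i, (t i - c i) ^ α i) = ∏ i, u i ^ α i := by
      rw [← Finset.prod_mul_distrib]
      exact Finset.prod_congr rfl fun i _ => by rw [hu, mul_pow]
    have hrhs : ∏ i, v i ^ α i / ((α i).factorial : ℝ)
        = (2 / σ ^ 2) ^ (∑ i, α i) / (∏ i, ((α i).factorial : ℝ)) * ∏ i, u i ^ α i := by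
      rw [Finset.prod_div_distrib]
      have : ∏ i, v i ^ α i = (2 / σ ^ 2) ^ (∑ i, α i) * ∏ i, u i ^ α i := by
        rw [← Finset.prod_pow_eq_pow_sum, ← Finset.prod_mul_distrib]
        exact Finset.prod_congr rfl fun i _ => by rw [hv, mul_pow]
      rw [this]
      ring
    have expand : phiFn n σ c α x * phiFn n σ c α t
        = (Real.sqrt ((2 / σ ^ 2) ^ (∑ i, α i) * (Nat.multinomial Finset.univ α : ℝ) /
              ((∑ i, α i).factorial : ℝ)) *
            Real.sqrt ((2 / σ ^ 2) ^ (∑ i, α i) * (Nat.multinomial Finset.univ α : ℝ) /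
              ((∑ i, α i).factorial : ℝ))) *
          (Real.exp (-‖x - c‖ ^ 2 / σ ^ 2) * Real.exp (-‖t - c‖ ^ 2 / σ ^ 2)) *
          ((∏ i, (x i - c i) ^ α i) * (∏ i, (t i - c i) ^ α i)) := by
      unfold phiFn; ring
    rw [expand, hAs, hPx, hrhs, hA2, hE]
    ring
  have hsum : HasSum (fun α : Fin n → ℕ => phiFn n σ c α x * phiFn n σ c α t)
      (E * Real.exp (∑ i, v i)) := by
    have hfe : (fun α : Fin n → ℕ => phiFn n σ c α x * phiFn n σ c α t)
        = fun α => E * ∏ i, v i ^ α i / ((α i).factorial : ℝ) := funext hpt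
    rw [hfe]
    exact (hasSum_pi_exp n v).mul_left E
  have hnrm : ∀ y z : EuclideanSpace ℝ (Fin n), ‖y - z‖ ^ 2 = ∑ i, (y i - z i) ^ 2 := by
    intro y z
    rw [EuclideanSpace.norm_eq, Real.sq_sqrt (Finset.sum_nonneg fun i _ => sq_nonneg _)]
    exact Finset.sum_congr rfl fun i _ => by simp [Real.norm_eq_abs, sq_abs]
  have hval : E * Real.exp (∑ i, v i) = Real.exp (-‖x - t‖ ^ 2 / σ ^ 2) := by
    rw [hE, ← Real.exp_add, ← Real.exp_add]
    congr 1
    have hd : ∑ i, (x i - t i) ^ 2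
        = ∑ i, (x i - c i) ^ 2 + ∑ i, (t i - c i) ^ 2 - 2 * ∑ i, u i := by
      calc ∑ i, (x i - t i) ^ 2
          = ∑ i, ((x i - c i) ^ 2 + (t i - c i) ^ 2 - 2 * u i) :=
            Finset.sum_congr rfl fun i _ => by rw [hu]; ring
        _ = ∑ i, (x i - c i) ^ 2 + ∑ i, (t i - c i) ^ 2 - 2 * ∑ i, u i := by
            rw [Finset.sum_sub_distrib, Finset.sum_add_distrib, Finset.mul_sum]
    have hvsum : ∑ i, v i = 2 / σ ^ 2 * ∑ i, u i := by
      rw [Finset.mul_sum]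
    rw [hnrm x c, hnrm t c, hnrm x t, hd, hvsum]
    field_simp
    ring
  refine ⟨hsum.summable, ?_⟩
  have e := Equiv.sigmaFiberEquiv (fun α : Fin n → ℕ => ∑ i, α i)
  have h2 : Summable ((fun α : Fin n → ℕ => phiFn n σ c α x * phiFn n σ c α t) ∘
      (Equiv.sigmaFiberEquiv (fun α : Fin n → ℕ => ∑ i, α i))) :=
    (Equiv.summable_iff _).mpr hsum.summable
  calc (∑' k : ℕ, ∑' α : {α : Fin n → ℕ // ∑ i, α i = k},
          phiFn n σ c α.1 x * phiFn n σ c α.1 t)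
      = ∑' p : (Σ k : ℕ, {α : Fin n → ℕ // ∑ i, α i = k}),
          phiFn n σ c p.2.1 x * phiFn n σ c p.2.1 t := (Summable.tsum_sigma h2).symm
    _ = ∑' α : Fin n → ℕ, phiFn n σ c α x * phiFn n σ c α t :=
        (Equiv.sigmaFiberEquiv (fun α : Fin n → ℕ => ∑ i, α i)).tsum_eq
          (fun α : Fin n → ℕ => phiFn n σ c α x * phiFn n σ c α t)
    _ = Real.exp (-‖x - t‖ ^ 2 / σ ^ 2) := by rw [hsum.tsum_eq, hval]
end

section
/- Let σ > 0, c ∈ ℝ, and μ ∈ ℝ with 0 < μ < 2. Let X ⊆ ℝ have non-empty interior, let K(x,t) = exp(-(x-t)²/σ²), and let H_K be the RKHS of K on X. Then the function x ↦ exp(-μ(x-c)²/σ²), restricted to X, belongs to H_K with ‖exp(-μ(·-c)²/σ²)‖²_{H_K} = 1/√(μ(2-μ)) = 1/√(1-(μ-1)²). -/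
open scoped RealInnerProductSpace

/-- A Hilbert space of real-valued functions on `X`: a Hilbert space `carrier` together with an
injective linear realization of its elements as functions `X → ℝ` (so that the vector space
operations are pointwise). -/
structure HilbertFunSpace (X : Type*) where
  carrier : Type
  [ng : NormedAddCommGroup carrier]
  [ip : InnerProductSpace ℝ carrier]
  [cs : CompleteSpace carrier]
  toFun : carrier → X → ℝ
  add' : ∀ f g : carrier, toFun (f + g) = toFun f + toFun g
  smul' : ∀ (a : ℝ) (f : carrier), toFun (a • f) = a • toFun f
  inj' : Function.Injective toFun

attribute [instance] HilbertFunSpace.ng HilbertFunSpace.ip HilbertFunSpace.cs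

/-- `S` is a reproducing kernel Hilbert space with kernel `K`. -/
def HilbertFunSpace.IsRKHS {X : Type*} (S : HilbertFunSpace X) (K : X → X → ℝ) : Prop :=
  ∀ x : X, ∃ kx : S.carrier, S.toFun kx = (fun y => K x y) ∧
    ∀ f : S.carrier, ⟪f, kx⟫ = S.toFun f x

noncomputable section GaussAuxSection
open scoped RealInnerProductSpace ENNReal

namespace GaussAux
open Finset Nat


/-- `S n = ∑_{k=0}^n C(2k,k) C(2(n-k),n-k)`. -/
def S (n : ℕ) : ℕ := ∑ k ∈ range (n + 1), centralBinom k * centralBinom (n - k)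

def T (n : ℕ) : ℕ := ∑ k ∈ range (n + 1), k * (centralBinom k * centralBinom (n - k))

lemma two_T (m : ℕ) : 2 * T m = m * S m := by
  have h1 : T m = ∑ k ∈ range (m + 1), (m - k) * (centralBinom (m - k) * centralBinom k) := by
    rw [T, ← Finset.sum_range_reflect (fun k => k * (centralBinom k * centralBinom (m - k))) (m+1)]
    apply Finset.sum_congr rfl
    intro k hk
    rw [Finset.mem_range] at hk
    have e1 : m + 1 - 1 - k = m - k := by omega
    have e2 : m - (m - k) = k := by omega
    simp only [e1, e2]
  have h2 : 2 * T m = T m + T m := by ring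
  rw [h2]
  nth_rewrite 2 [h1]
  rw [T, S, Finset.mul_sum, ← Finset.sum_add_distrib]
  apply Finset.sum_congr rfl
  intro k hk
  rw [Finset.mem_range] at hk
  have hk' : k ≤ m := by omega
  have e : k + (m - k) = m := by omega
  calc k * (centralBinom k * centralBinom (m - k)) + (m - k) * (centralBinom (m - k) * centralBinom k)
      = (k + (m - k)) * (centralBinom k * centralBinom (m - k)) := by ring
    _ = m * (centralBinom k * centralBinom (m - k)) := by rw [e]

lemma T_succ (n : ℕ) : T (n + 1) = 4 * T n + 2 * S n := by
  rw [T, Finset.sum_range_succ']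
  simp only [Nat.zero_mul, add_zero]
  have : ∀ j ∈ range (n + 1), (j + 1) * (centralBinom (j + 1) * centralBinom (n + 1 - (j + 1))) =
      4 * (j * (centralBinom j * centralBinom (n - j))) + 2 * (centralBinom j * centralBinom (n - j)) := by
    intro j hj
    have h : n + 1 - (j + 1) = n - j := by omega
    rw [h, ← mul_assoc, Nat.succ_mul_centralBinom_succ]
    ring
  rw [Finset.sum_congr rfl this, Finset.sum_add_distrib, ← Finset.mul_sum, ← Finset.mul_sum]
  rfl

lemma S_succ (n : ℕ) : S (n + 1) = 4 * S n := by
  have h := two_T (n + 1)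
  rw [T_succ] at h
  have h2 := two_T n
  have : (n + 1) * S (n + 1) = (n + 1) * (4 * S n) := by
    rw [← h]; ring_nf; ring_nf at h2 ⊢; omega
  exact Nat.eq_of_mul_eq_mul_left (by omega) this

lemma S_eq (n : ℕ) : S n = 4 ^ n := by
  induction n with
  | zero => simp [S, centralBinom]
  | succ k ih => rw [S_succ, ih]; ring

lemma centralBinom_le_four_pow (n : ℕ) : centralBinom n ≤ 4 ^ n := by
  have : centralBinom n * centralBinom (n - n) ≤ S n :=
    Finset.single_le_sum (f := fun k => centralBinom k * centralBinom (n - k))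
      (fun i _ => Nat.zero_le _) (by simp)
  simpa [centralBinom, S_eq] using this





lemma hasSum_exp_div (r : ℝ) : HasSum (fun n => r ^ n / n !) (Real.exp r) := by
  rw [Real.exp_eq_exp_ℝ]
  exact NormedSpace.expSeries_div_hasSum_exp r

lemma summable_cb {y : ℝ} (h0 : 0 ≤ y) (h1 : y < 1 / 4) :
    Summable (fun j => (centralBinom j : ℝ) * y ^ j) := by
  refine Summable.of_nonneg_of_le (fun j => by positivity) (fun j => ?_)
    (summable_geometric_of_lt_one (r := 4 * y) (by positivity) (by linarith))
  · rw [mul_pow]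
    apply mul_le_mul_of_nonneg_right _ (by positivity)
    calc ((centralBinom j : ℝ)) ≤ ((4 : ℕ) ^ j : ℕ) := by
          exact_mod_cast centralBinom_le_four_pow j
      _ = 4 ^ j := by push_cast; ring

lemma hasSum_cb {y : ℝ} (h0 : 0 ≤ y) (h1 : y < 1 / 4) :
    HasSum (fun j => (centralBinom j : ℝ) * y ^ j) (1 / Real.sqrt (1 - 4 * y)) := by
  have hs := summable_cb h0 h1
  set A := ∑' j, (centralBinom j : ℝ) * y ^ j with hA
  have hnorm : Summable (fun j => ‖(centralBinom j : ℝ) * y ^ j‖) := by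
    simpa only [Real.norm_eq_abs] using hs.abs
  have hy4 : 0 ≤ 4 * y := by linarith
  have hy4' : 4 * y < 1 := by linarith
  have hsq : A * A = 1 / (1 - 4 * y) := by
    rw [hA, tsum_mul_tsum_eq_tsum_sum_range_of_summable_norm hnorm hnorm]
    have : ∀ n : ℕ, (∑ k ∈ range (n + 1),
        ((centralBinom k : ℝ) * y ^ k) * ((centralBinom (n - k) : ℝ) * y ^ (n - k)))
        = (4 * y) ^ n := by
      intro n
      have : ∀ k ∈ range (n + 1),
          ((centralBinom k : ℝ) * y ^ k) * ((centralBinom (n - k) : ℝ) * y ^ (n - k))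
          = ((centralBinom k * centralBinom (n - k) : ℕ) : ℝ) * y ^ n := by
        intro k hk
        rw [Finset.mem_range] at hk
        have : y ^ k * y ^ (n - k) = y ^ n := by
          rw [← pow_add]; congr 1; omega
        push_cast
        rw [← this]; ring
      rw [Finset.sum_congr rfl this, ← Finset.sum_mul, ← Nat.cast_sum]
      have : (∑ k ∈ range (n + 1), centralBinom k * centralBinom (n - k)) = 4 ^ n := S_eq n
      rw [this]
      push_cast
      ring
    rw [tsum_congr this, tsum_geometric_of_lt_one hy4 hy4', one_div]
  have hApos : 0 ≤ A := tsum_nonneg (fun j => by positivity)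
  have h1y : 0 < 1 - 4 * y := by linarith
  have : A = 1 / Real.sqrt (1 - 4 * y) := by
    have h2 : A ^ 2 = (1 / Real.sqrt (1 - 4 * y)) ^ 2 := by
      rw [div_pow, one_pow, Real.sq_sqrt h1y.le, sq, hsq]
    have hBpos : 0 ≤ 1 / Real.sqrt (1 - 4 * y) := by positivity
    nlinarith [sq_nonneg (A - 1 / Real.sqrt (1 - 4 * y)), sq_nonneg (A + 1 / Real.sqrt (1 - 4 * y))]
  exact this ▸ hs.hasSum


open Nat


abbrev E2 : Type := lp (fun _ : ℕ => ℝ) 2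

lemma rpow_toReal_two (x : ℝ) : x ^ (2 : ℝ≥0∞).toReal = x ^ (2 : ℕ) := by
  have : (2 : ℝ≥0∞).toReal = ((2 : ℕ) : ℝ) := by simp
  rw [this, Real.rpow_natCast]

lemma sq_div_sqrt_factorial (u : ℝ) (n : ℕ) :
    (u ^ n / Real.sqrt n !) ^ (2 : ℕ) = (u ^ 2) ^ n / n ! := by
  rw [div_pow, Real.sq_sqrt (by positivity : (0:ℝ) ≤ (n ! : ℝ))]
  congr 1
  rw [← pow_mul, ← pow_mul, mul_comm]

lemma memℓp_psi (u : ℝ) : Memℓp (fun n => u ^ n / Real.sqrt n !) 2 := by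
  apply memℓp_gen
  have h : (fun n : ℕ => ‖u ^ n / Real.sqrt n !‖ ^ (2 : ℝ≥0∞).toReal)
      = fun n => (u ^ 2) ^ n / n ! := by
    funext n
    rw [rpow_toReal_two, ← sq_div_sqrt_factorial u n, Real.norm_eq_abs, sq_abs]
  rw [h]
  exact (hasSum_exp_div (u ^ 2)).summable

def psi (u : ℝ) : E2 := ⟨fun n => u ^ n / Real.sqrt n !, memℓp_psi u⟩

lemma psi_apply (u : ℝ) (n : ℕ) : (psi u : ∀ _ : ℕ, ℝ) n = u ^ n / Real.sqrt n ! := rfl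

lemma inner_psi_psi (u w : ℝ) : ⟪psi u, psi w⟫ = Real.exp (u * w) := by
  have h := lp.hasSum_inner (𝕜 := ℝ) (psi u) (psi w)
  have h2 : (fun n => ⟪(psi u : ∀ _ : ℕ, ℝ) n, (psi w : ∀ _ : ℕ, ℝ) n⟫) =
      fun n => (u * w) ^ n / n ! := by
    funext n
    rw [RCLike.inner_apply]
    simp only [psi_apply, starRingEnd_apply, star_trivial]
    have hfac : Real.sqrt n ! * Real.sqrt n ! = (n ! : ℝ) :=
      Real.mul_self_sqrt (by positivity)
    calc w ^ n / Real.sqrt n ! * (u ^ n / Real.sqrt n !)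
        = (u * w) ^ n / (Real.sqrt n ! * Real.sqrt n !) := by rw [mul_pow]; ring
      _ = (u * w) ^ n / n ! := by rw [hfac]
  rw [h2] at h
  exact h.unique (hasSum_exp_div (u * w))

/-- The feature map for the Gaussian kernel, centered at `c`. -/
def Phi (σ c x : ℝ) : E2 :=
  Real.exp (-(x - c) ^ 2 / σ ^ 2) • psi (Real.sqrt 2 * (x - c) / σ)

lemma inner_Phi_Phi {σ : ℝ} (hσ : σ ≠ 0) (c x y : ℝ) :
    ⟪Phi σ c x, Phi σ c y⟫ = Real.exp (-(x - y) ^ 2 / σ ^ 2) := by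
  simp only [Phi]
  rw [real_inner_smul_left, real_inner_smul_right, inner_psi_psi]
  have h2 : Real.sqrt 2 * Real.sqrt 2 = 2 := Real.mul_self_sqrt (by norm_num)
  have key : (Real.sqrt 2 * (x - c) / σ) * (Real.sqrt 2 * (y - c) / σ)
      = 2 * ((x - c) * (y - c)) / σ ^ 2 := by
    calc Real.sqrt 2 * (x - c) / σ * (Real.sqrt 2 * (y - c) / σ)
        = (Real.sqrt 2 * Real.sqrt 2) * ((x - c) * (y - c)) / σ ^ 2 := by rw [sq]; ring
      _ = 2 * ((x - c) * (y - c)) / σ ^ 2 := by rw [h2]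
  rw [key, ← Real.exp_add, ← Real.exp_add]
  congr 1
  field_simp
  ring

lemma hasSum_even_support {f : ℕ → ℝ} (hodd : ∀ n, ¬ Even n → f n = 0) {l : ℝ}
    (h : HasSum (fun j => f (2 * j)) l) : HasSum f l := by
  have hinj : Function.Injective (fun j : ℕ => 2 * j) := fun a b hab => by
    have h2 : 2 * a = 2 * b := hab
    omega
  refine (Function.Injective.hasSum_iff hinj ?_).mp h
  intro n hn
  apply hodd
  intro he
  obtain ⟨r, hr⟩ := he
  exact hn ⟨r, show 2 * r = n by omega⟩

/-- Coefficients of the element representing `exp(a·u²)` in coherent-state coordinates. -/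
def vf (a : ℝ) (n : ℕ) : ℝ :=
  if Even n then a ^ (n / 2) * Real.sqrt n ! / ((n / 2)! : ℝ) else 0

lemma vf_odd {a : ℝ} {n : ℕ} (h : ¬ Even n) : vf a n = 0 := by simp [vf, h]

lemma vf_even (a : ℝ) (j : ℕ) :
    vf a (2 * j) = a ^ j * Real.sqrt ((2 * j)!) / (j ! : ℝ) := by
  have h : (2 * j) / 2 = j := by omega
  simp [vf, h]

lemma centralBinom_cast (j : ℕ) :
    ((centralBinom j : ℝ)) = ((2 * j)! : ℝ) / ((j ! : ℝ) * (j ! : ℝ)) := by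
  have h := Nat.choose_mul_factorial_mul_factorial (show j ≤ 2 * j by omega)
  have h2 : 2 * j - j = j := by omega
  rw [h2] at h
  have h3 : ((2*j).choose j * j ! * j ! : ℕ) = ((2*j)! : ℕ) := h
  have h4 : ((2*j).choose j : ℝ) * (j ! : ℝ) * (j ! : ℝ) = ((2*j)! : ℝ) := by
    exact_mod_cast congrArg (Nat.cast (R := ℝ)) h3
  rw [Nat.centralBinom_eq_two_mul_choose]
  field_simp
  linarith [h4]

lemma vf_sq (a : ℝ) (j : ℕ) :
    (vf a (2 * j)) ^ 2 = (centralBinom j : ℝ) * (a ^ 2) ^ j := by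
  rw [vf_even, centralBinom_cast, div_pow, mul_pow,
    Real.sq_sqrt (by positivity : (0:ℝ) ≤ ((2*j)! : ℝ))]
  rw [← pow_mul, ← pow_mul, mul_comm j 2]
  field_simp

lemma hasSum_vf_sq {a : ℝ} (ha : a ^ 2 < 1 / 4) :
    HasSum (fun n => (vf a n) ^ 2) (1 / Real.sqrt (1 - 4 * a ^ 2)) := by
  apply hasSum_even_support (fun n hn => by rw [vf_odd hn]; ring)
  have h := hasSum_cb (y := a ^ 2) (by positivity) ha
  have hfun : (fun j => (vf a (2 * j)) ^ 2)
      = fun j => (centralBinom j : ℝ) * (a ^ 2) ^ j := funext (vf_sq a)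
  have : HasSum (fun j => (vf a (2 * j)) ^ 2) (1 / Real.sqrt (1 - 4 * a ^ 2)) := by
    rw [hfun]; exact h
  exact this

lemma memℓp_vf {a : ℝ} (ha : a ^ 2 < 1 / 4) : Memℓp (vf a) 2 := by
  apply memℓp_gen
  have h : (fun n : ℕ => ‖vf a n‖ ^ (2 : ℝ≥0∞).toReal) = fun n => (vf a n) ^ 2 := by
    funext n
    rw [rpow_toReal_two, Real.norm_eq_abs, sq_abs]
  rw [h]
  exact (hasSum_vf_sq ha).summable

def vvec (a : ℝ) (ha : a ^ 2 < 1 / 4) : E2 := ⟨vf a, memℓp_vf ha⟩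

lemma inner_vvec_vvec {a : ℝ} (ha : a ^ 2 < 1 / 4) :
    ⟪vvec a ha, vvec a ha⟫ = 1 / Real.sqrt (1 - 4 * a ^ 2) := by
  have h := lp.hasSum_inner (𝕜 := ℝ) (vvec a ha) (vvec a ha)
  have h2 : (fun n => ⟪(vvec a ha : ∀ _ : ℕ, ℝ) n, (vvec a ha : ∀ _ : ℕ, ℝ) n⟫) =
      fun n => (vf a n) ^ 2 := by
    funext n
    rw [RCLike.inner_apply]
    simp only [starRingEnd_apply, star_trivial]
    rw [sq]
    rfl
  rw [h2] at h
  exact h.unique (hasSum_vf_sq ha)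

lemma inner_vvec_psi {a : ℝ} (ha : a ^ 2 < 1 / 4) (t : ℝ) :
    ⟪vvec a ha, psi t⟫ = Real.exp (a * t ^ 2) := by
  have h := lp.hasSum_inner (𝕜 := ℝ) (vvec a ha) (psi t)
  have h2 : (fun n => ⟪(vvec a ha : ∀ _ : ℕ, ℝ) n, (psi t : ∀ _ : ℕ, ℝ) n⟫) =
      fun n => vf a n * (t ^ n / Real.sqrt n !) := by
    funext n
    rw [RCLike.inner_apply]
    simp only [starRingEnd_apply, star_trivial]
    exact mul_comm _ _
  rw [h2] at h
  refine h.unique (hasSum_even_support (fun n hn => by rw [vf_odd hn]; ring) ?_)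
  have key : ∀ j : ℕ, vf a (2 * j) * (t ^ (2 * j) / Real.sqrt ((2 * j)!))
      = (a * t ^ 2) ^ j / j ! := by
    intro j
    rw [vf_even]
    have hfac : Real.sqrt ((2 * j)!) ≠ 0 := by positivity
    field_simp
    ring
  have hfun : (fun j => vf a (2 * j) * (t ^ (2 * j) / Real.sqrt ((2 * j)!)))
      = fun j => (a * t ^ 2) ^ j / (j ! : ℝ) := funext key
  have : HasSum (fun j => vf a (2 * j) * (t ^ (2 * j) / Real.sqrt ((2 * j)!)))
      (Real.exp (a * t ^ 2)) := by
    rw [hfun]; exact hasSum_exp_div _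
  exact this

open FormalMultilinearSeries in
/-- If `w` is `ℓ²`-orthogonal to all coherent states `psi (√2 (t-c)/σ)`, `t ∈ T`,
with `T` having nonempty interior, then `w = 0`. -/
lemma eq_zero_of_orthogonal_psi {σ c : ℝ} (hσ : σ ≠ 0) {T : Set ℝ}
    (hT : (interior T).Nonempty) (w : E2)
    (hw : ∀ t ∈ T, ⟪psi (Real.sqrt 2 * (t - c) / σ), w⟫ = 0) : w = 0 := by
  classical
  set cs : ℕ → ℝ := fun n => (w : ∀ _ : ℕ, ℝ) n / Real.sqrt n ! with hcs
  set p : FormalMultilinearSeries ℝ ℝ ℝ := ofScalars ℝ cs with hp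
  -- summability of w-squares
  have hw2 : Summable (fun n => ((w : ∀ _ : ℕ, ℝ) n) ^ 2) := by
    have h := (memℓp_gen_iff (by norm_num : (0:ℝ) < (2 : ℝ≥0∞).toReal)).mp (lp.memℓp w)
    have heq : (fun n : ℕ => ‖(w : ∀ _ : ℕ, ℝ) n‖ ^ (2 : ℝ≥0∞).toReal)
        = fun n => ((w : ∀ _ : ℕ, ℝ) n) ^ 2 := by
      funext n; rw [rpow_toReal_two, Real.norm_eq_abs, sq_abs]
    rwa [heq] at h
  -- radius of p is ∞
  have hrad : p.radius = ⊤ := by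
    apply radius_eq_top_of_summable_norm
    intro r
    have hle : ∀ n : ℕ, ‖p n‖ * (r : ℝ) ^ n
        ≤ (((w : ∀ _ : ℕ, ℝ) n) ^ 2 + ((r : ℝ) ^ 2) ^ n / n !) / 2 := by
      intro n
      rw [hp, ofScalars_norm]
      have h1 : ‖cs n‖ * (r : ℝ) ^ n = |(w : ∀ _ : ℕ, ℝ) n| * ((r : ℝ) ^ n / Real.sqrt n !) := by
        rw [hcs, Real.norm_eq_abs, abs_div, abs_of_nonneg (Real.sqrt_nonneg _)]
        ring
      rw [h1]
      have h2 : ((r : ℝ) ^ n / Real.sqrt n !) ^ 2 = ((r : ℝ) ^ 2) ^ n / n ! :=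
        sq_div_sqrt_factorial _ n
      nlinarith [sq_nonneg (|(w : ∀ _ : ℕ, ℝ) n| - (r : ℝ) ^ n / Real.sqrt n !),
        sq_abs ((w : ∀ _ : ℕ, ℝ) n), abs_nonneg ((w : ∀ _ : ℕ, ℝ) n),
        div_nonneg (pow_nonneg r.coe_nonneg n) (Real.sqrt_nonneg ((n ! : ℕ) : ℝ))]
    have hsum : Summable (fun n => (((w : ∀ _ : ℕ, ℝ) n) ^ 2 + ((r : ℝ) ^ 2) ^ n / n !) / 2) :=
      ((hw2.add (hasSum_exp_div ((r : ℝ) ^ 2)).summable).div_const 2)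
    exact Summable.of_nonneg_of_le
      (fun n => mul_nonneg (norm_nonneg _) (pow_nonneg r.coe_nonneg n)) hle hsum
  have hball := p.hasFPowerSeriesOnBall (by rw [hrad]; exact ENNReal.zero_lt_top)
  -- the sum of p equals the inner products
  have hsum_eq : ∀ s : ℝ, p.sum s = ⟪psi s, w⟫ := by
    intro s
    have h := lp.hasSum_inner (𝕜 := ℝ) (psi s) w
    have h2 : (fun n => ⟪(psi s : ∀ _ : ℕ, ℝ) n, (w : ∀ _ : ℕ, ℝ) n⟫) =
        fun n => cs n • s ^ n := by
      funext n
      rw [RCLike.inner_apply]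
      simp only [starRingEnd_apply, star_trivial, psi_apply, smul_eq_mul, hcs]
      ring
    rw [h2] at h
    have : p.sum s = ∑' n, cs n • s ^ n := ofScalars_sum_eq cs s
    rw [this, h.tsum_eq]
  -- H = G ∘ affine vanishes near a point, hence everywhere
  set H : ℝ → ℝ := fun x => p.sum (Real.sqrt 2 * (x - c) / σ) with hH
  have hGanal : AnalyticOnNhd ℝ p.sum Set.univ := by
    have := hball.analyticOnNhd
    intro z _
    refine this (x := z) ?_
    rw [hrad]
    simp only [EMetric.mem_ball]
    exact edist_lt_top z 0
  have haff : ∀ x : ℝ, AnalyticAt ℝ (fun x : ℝ => Real.sqrt 2 * (x - c) / σ) x := by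
    intro x
    have heq : (fun x : ℝ => Real.sqrt 2 * (x - c) / σ)
        = fun x : ℝ => Real.sqrt 2 * (x - c) * σ⁻¹ := by
      funext t; rw [div_eq_mul_inv]
    rw [heq]
    exact (analyticAt_const.mul (analyticAt_id.sub analyticAt_const)).mul analyticAt_const
  have hHanal : AnalyticOnNhd ℝ H Set.univ := fun x _ =>
    (hGanal _ trivial).comp (haff x)
  obtain ⟨x₀, hx₀⟩ := hT
  have hHev : H =ᶠ[nhds x₀] 0 := by
    filter_upwards [isOpen_interior.mem_nhds hx₀] with t ht
    have := hw t (interior_subset ht)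
    simp only [hH, Pi.zero_apply]
    rw [hsum_eq, this]
  have hH0 : Set.EqOn H 0 Set.univ :=
    hHanal.eqOn_zero_of_preconnected_of_eventuallyEq_zero isPreconnected_univ
      (Set.mem_univ x₀) hHev
  -- hence p.sum vanishes identically
  have hG0 : ∀ z : ℝ, p.sum z = 0 := by
    intro z
    have h2 : Real.sqrt 2 ≠ 0 := by positivity
    have := hH0 (Set.mem_univ (c + σ * z / Real.sqrt 2))
    simp only [hH, Pi.zero_apply] at this
    have harg : Real.sqrt 2 * (c + σ * z / Real.sqrt 2 - c) / σ = z := by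
      field_simp
      ring
    rwa [harg] at this
  -- so p = 0 and w = 0
  have hp0 : p = 0 := by
    apply hball.hasFPowerSeriesAt.eq_zero_of_eventually
    exact Filter.Eventually.of_forall (fun z => hG0 z)
  have hcs0 : cs = 0 := by
    rw [hp] at hp0
    exact (ofScalars_series_eq_zero ℝ).mp hp0
  apply lp.ext
  funext n
  have : cs n = 0 := by rw [hcs0]; rfl
  rw [hcs] at this
  have hfac : Real.sqrt (n ! : ℝ) ≠ 0 := by positivity
  have := (div_eq_zero_iff.mp this).resolve_right hfac
  simpa [lp.coeFn_zero] using this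
lemma Phi_eq (σ c x : ℝ) : Phi σ c x =
    Real.exp (-(x - c) ^ 2 / σ ^ 2) • psi (Real.sqrt 2 * (x - c) / σ) := rfl

lemma span_dense_of_sep {H : Type*} [NormedAddCommGroup H] [InnerProductSpace ℝ H]
    [CompleteSpace H] {ι : Type*} (F : ι → H)
    (hsep : ∀ w : H, (∀ i, ⟪F i, w⟫ = 0) → w = 0) :
    (Submodule.span ℝ (Set.range F)).topologicalClosure = ⊤ := by
  rw [Submodule.topologicalClosure_eq_top_iff, Submodule.eq_bot_iff]
  intro w hw
  exact hsep w fun i => ((Submodule.mem_orthogonal _ w).mp hw) (F i)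
    (Submodule.subset_span (Set.mem_range_self i))


end GaussAux

/-- for `0 < μ < 2`, the function `x ↦ exp(-μ(x-c)²/σ²)`, restricted to
`X ⊆ ℝ` (with non-empty interior), belongs to the Gaussian RKHS `H_K` on `X` with
`‖·‖² = 1/√(μ(2-μ)) = 1/√(1-(μ-1)²)`. -/
theorem gaussian_rkhs_exp_mu_one_dim (σ c μ : ℝ) (hσ : 0 < σ) (hμ0 : 0 < μ) (hμ2 : μ < 2)
    (X : Set ℝ) (hX : (interior X).Nonempty)
    (S : HilbertFunSpace X)
    (hS : S.IsRKHS (fun x t : X => Real.exp (-((x : ℝ) - (t : ℝ)) ^ 2 / σ ^ 2))) :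
    ∃ g : S.carrier,
      S.toFun g = (fun x : X => Real.exp (-(μ * ((x : ℝ) - c) ^ 2) / σ ^ 2)) ∧
      ‖g‖ ^ 2 = 1 / Real.sqrt (μ * (2 - μ)) ∧
      ‖g‖ ^ 2 = 1 / Real.sqrt (1 - (μ - 1) ^ 2) := by
  classical
  open GaussAux in
  obtain ⟨k, hk⟩ := Classical.axiomOfChoice hS
  have hk1 : ∀ x : X, S.toFun (k x) = fun y : X => Real.exp (-((x:ℝ) - (y:ℝ)) ^ 2 / σ ^ 2) :=
    fun x => (hk x).1
  have hk2 : ∀ (x : X) (f : S.carrier), ⟪f, k x⟫ = S.toFun f x := fun x => (hk x).2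
  set a : ℝ := (1 - μ) / 2 with ha_def
  have ha : a ^ 2 < 1 / 4 := by rw [ha_def]; nlinarith
  set v : GaussAux.E2 := GaussAux.vvec a ha with hv_def
  set Φ' : X → GaussAux.E2 := fun x => GaussAux.Phi σ c (x : ℝ) with hΦ'_def
  -- Gram equality
  have hGram : ∀ x y : X, ⟪Φ' x, Φ' y⟫ = ⟪k x, k y⟫ := by
    intro x y
    rw [hk2 y (k x)]
    have := congrFun (hk1 x) y
    rw [this]
    exact GaussAux.inner_Phi_Phi hσ.ne' c (x : ℝ) (y : ℝ)
  set A : (X →₀ ℝ) →ₗ[ℝ] GaussAux.E2 := Finsupp.linearCombination ℝ Φ' with hA_def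
  set B : (X →₀ ℝ) →ₗ[ℝ] S.carrier := Finsupp.linearCombination ℝ k with hB_def
  have hEval : ∀ (d : X →₀ ℝ) (e : GaussAux.E2) (f : S.carrier),
      (∀ x : X, ⟪Φ' x, e⟫ = ⟪k x, f⟫) → ⟪A d, e⟫ = ⟪B d, f⟫ := by
    intro d e f hef
    rw [hA_def, hB_def, Finsupp.linearCombination_apply, Finsupp.linearCombination_apply,
      Finsupp.sum, Finsupp.sum, sum_inner, sum_inner]
    refine Finset.sum_congr rfl fun x _ => ?_
    rw [real_inner_smul_left, real_inner_smul_left, hef x]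
  have hIP : ∀ d d' : X →₀ ℝ, ⟪A d, A d'⟫ = ⟪B d, B d'⟫ := by
    intro d d'
    apply hEval
    intro x
    rw [real_inner_comm (A d') (Φ' x), real_inner_comm (B d') (k x)]
    apply hEval
    intro y
    exact hGram y x
  have hNorm : ∀ d : X →₀ ℝ, ‖B d‖ = ‖A d‖ := by
    intro d
    have h := hIP d d
    rw [real_inner_self_eq_norm_sq, real_inner_self_eq_norm_sq] at h
    have := congrArg Real.sqrt h
    rw [Real.sqrt_sq (norm_nonneg _), Real.sqrt_sq (norm_nonneg _)] at this
    exact this.symm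
  -- density
  have hdense : (Submodule.span ℝ (Set.range Φ')).topologicalClosure = ⊤ := by
    apply GaussAux.span_dense_of_sep
    intro w hw
    apply GaussAux.eq_zero_of_orthogonal_psi hσ.ne' (c := c) hX w
    intro t ht
    have h := hw ⟨t, ht⟩
    rw [hΦ'_def] at h
    simp only [GaussAux.Phi_eq] at h
    rw [real_inner_smul_left] at h
    have hexp : Real.exp (-((t:ℝ) - c) ^ 2 / σ ^ 2) ≠ 0 := Real.exp_ne_zero _
    exact (mul_eq_zero.mp h).resolve_left hexp
  -- v lies in the closure of the span
  have hv_cl : v ∈ closure ((Submodule.span ℝ (Set.range Φ') :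
      Submodule ℝ GaussAux.E2) : Set GaussAux.E2) := by
    rw [← Submodule.topologicalClosure_coe, hdense]
    trivial
  rw [mem_closure_iff_seq_limit] at hv_cl
  obtain ⟨sq, hsq_mem, hsq_lim⟩ := hv_cl
  have hrep : ∀ n, ∃ d : X →₀ ℝ, A d = sq n := by
    intro n
    have h : sq n ∈ LinearMap.range A := by
      rw [hA_def, Finsupp.range_linearCombination]
      exact hsq_mem n
    exact h
  choose d hd using hrep
  have hdist : ∀ m n : ℕ, dist (B (d m)) (B (d n)) = dist (sq m) (sq n) := by
    intro m n
    rw [dist_eq_norm, dist_eq_norm, ← hd m, ← hd n, ← map_sub, ← map_sub, hNorm]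
  have hcauchy : CauchySeq (fun n => B (d n)) := by
    rw [Metric.cauchySeq_iff]
    have h := Metric.cauchySeq_iff.mp hsq_lim.cauchySeq
    intro ε hε
    obtain ⟨N, hN⟩ := h ε hε
    exact ⟨N, fun m hm n hn => by rw [hdist]; exact hN m hm n hn⟩
  obtain ⟨g, hg⟩ := cauchySeq_tendsto_of_complete hcauchy
  have htf : ∀ x : X, ⟪g, k x⟫ = ⟪v, Φ' x⟫ := by
    intro x
    have h1 : Filter.Tendsto (fun n => ⟪B (d n), k x⟫) Filter.atTop (nhds ⟪g, k x⟫) :=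
      hg.inner tendsto_const_nhds
    have h2 : Filter.Tendsto (fun n => ⟪sq n, Φ' x⟫) Filter.atTop (nhds ⟪v, Φ' x⟫) :=
      hsq_lim.inner tendsto_const_nhds
    have h3 : (fun n => ⟪B (d n), k x⟫) = fun n => ⟪sq n, Φ' x⟫ := by
      funext n
      rw [← hd n]
      exact (hEval (d n) (Φ' x) (k x) (fun y => hGram y x)).symm
    rw [h3] at h1
    exact tendsto_nhds_unique h1 h2
  have hval : ∀ x : X, ⟪v, Φ' x⟫ = Real.exp (-(μ * ((x:ℝ) - c) ^ 2) / σ ^ 2) := by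
    intro x
    rw [hv_def, hΦ'_def]
    simp only [GaussAux.Phi_eq]
    rw [real_inner_smul_right, GaussAux.inner_vvec_psi]
    have h2 : Real.sqrt 2 ^ 2 = 2 := Real.sq_sqrt (by norm_num)
    have hsq2 : (Real.sqrt 2 * ((x:ℝ) - c) / σ) ^ 2 = 2 * ((x:ℝ) - c) ^ 2 / σ ^ 2 := by
      rw [div_pow, mul_pow, h2]
    rw [hsq2, ← Real.exp_add]
    congr 1
    rw [ha_def]
    field_simp
    ring
  have hnormg : ‖g‖ = ‖v‖ := by
    have h1 : Filter.Tendsto (fun n => ‖B (d n)‖) Filter.atTop (nhds ‖g‖) := hg.norm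
    have h2 : Filter.Tendsto (fun n => ‖sq n‖) Filter.atTop (nhds ‖v‖) := hsq_lim.norm
    have h3 : (fun n => ‖B (d n)‖) = fun n => ‖sq n‖ := funext fun n => by
      rw [hNorm, hd n]
    rw [h3] at h1
    exact tendsto_nhds_unique h1 h2
  have hnv : ‖g‖ ^ 2 = 1 / Real.sqrt (1 - 4 * a ^ 2) := by
    rw [hnormg, ← real_inner_self_eq_norm_sq, hv_def]
    exact GaussAux.inner_vvec_vvec ha
  refine ⟨g, ?_, ?_, ?_⟩
  · funext x
    rw [← hk2 x g, htf x, hval x]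
  · rw [hnv]
    have h : 1 - 4 * a ^ 2 = μ * (2 - μ) := by rw [ha_def]; ring
    rw [h]
  · rw [hnv]
    have h : 1 - 4 * a ^ 2 = 1 - (μ - 1) ^ 2 := by rw [ha_def]; ring
    rw [h]

end GaussAuxSection
end

section
/- Let n, d ∈ ℕ and let K : ℝⁿ × ℝⁿ → ℝ be given by K(x,t) = ⟨x,t⟩^d, where ⟨x,t⟩ is the Euclidean inner product. Then the RKHS of K on ℝⁿ is H_d(ℝⁿ), the space of homogeneous polynomials of degree d in n real variables, with the Weyl inner product: for f = ∑_{|α|=d} w_α t^α and g = ∑_{|α|=d} v_α t^α in H_d(ℝⁿ), ⟨f,g⟩_K = ∑_{|α|=d} w_α v_α / C^d_α. -/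
open scoped RealInnerProductSpace

noncomputable section PolyRKHSAux

namespace PolyRKHSAux

def sqC {n : ℕ} (α : Fin n → ℕ) : ℝ := Real.sqrt (Nat.multinomial Finset.univ α)

lemma sqC_pos {n : ℕ} (α : Fin n → ℕ) : 0 < sqC α :=
  Real.sqrt_pos.2 (by exact_mod_cast Nat.multinomial_pos _ _)

lemma sqC_ne_zero {n : ℕ} (α : Fin n → ℕ) : sqC α ≠ 0 := (sqC_pos α).ne'

lemma sqC_mul_self {n : ℕ} (α : Fin n → ℕ) :
    sqC α * sqC α = (Nat.multinomial Finset.univ α : ℝ) :=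
  Real.mul_self_sqrt (by positivity)

lemma coeff_unique {n : ℕ} (s : Finset (Fin n → ℕ)) (f : (Fin n → ℕ) → ℝ)
    (h : ∀ t : Fin n → ℝ, ∑ α ∈ s, f α * ∏ i, t i ^ α i = 0) :
    ∀ α ∈ s, f α = 0 := by
  intro α hα
  set P : MvPolynomial (Fin n) ℝ :=
    ∑ β ∈ s, MvPolynomial.monomial (Finsupp.equivFunOnFinite.symm β) (f β) with hP
  have hev : ∀ t : Fin n → ℝ, MvPolynomial.eval t P = 0 := by
    intro t
    rw [hP, map_sum]
    rw [← h t]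
    refine Finset.sum_congr rfl fun β hβ => ?_
    rw [MvPolynomial.eval_monomial, Finsupp.prod_pow]
    simp [Finsupp.equivFunOnFinite]
    exact Or.inl rfl
  have hP0 : P = 0 := MvPolynomial.funext (by simpa using hev)
  have := congrArg (MvPolynomial.coeff (Finsupp.equivFunOnFinite.symm α)) hP0
  rw [hP, MvPolynomial.coeff_zero] at this
  rw [MvPolynomial.coeff_sum] at this
  rw [Finset.sum_eq_single_of_mem α hα] at this
  · rwa [MvPolynomial.coeff_monomial, if_pos rfl] at this
  · intro β hβ hne
    rw [MvPolynomial.coeff_monomial, if_neg]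
    exact fun hc => hne (Finsupp.equivFunOnFinite.symm.injective hc)

variable (n d : ℕ)

/-- index type: multi-indices of degree d -/
abbrev Idx := {α : Fin n → ℕ // α ∈ Finset.Nat.antidiagonalTuple n d}

abbrev Car := EuclideanSpace ℝ (Idx n d)

variable {n d}

def tF (c : Car n d) (t : EuclideanSpace ℝ (Fin n)) : ℝ :=
  ∑ α : Idx n d, c α * sqC α.1 * ∏ i, t i ^ α.1 i

lemma inner_eq (c c' : Car n d) : ⟪c, c'⟫ = ∑ α : Idx n d, c α * c' α := by
  simp [PiLp.inner_apply, RCLike.inner_apply, conj_trivial]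
  exact Finset.sum_congr rfl fun _ _ => mul_comm _ _

/-- extension of coordinates to all multi-indices -/
def ext (c : Car n d) (β : Fin n → ℕ) : ℝ :=
  if h : β ∈ Finset.Nat.antidiagonalTuple n d then c ⟨β, h⟩ else 0

lemma tF_eq (c : Car n d) (t : EuclideanSpace ℝ (Fin n)) :
    tF c t = ∑ β ∈ Finset.Nat.antidiagonalTuple n d, ext c β * sqC β * ∏ i, t i ^ β i := by
  rw [tF, ← Finset.sum_coe_sort (Finset.Nat.antidiagonalTuple n d)
    (fun β => ext c β * sqC β * ∏ i, t i ^ β i)]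
  refine Finset.sum_congr rfl fun α _ => ?_
  rw [ext, dif_pos α.2]

lemma tF_inj : Function.Injective (tF (n := n) (d := d)) := by
  intro c c' h
  have key : ∀ t : Fin n → ℝ, ∑ β ∈ Finset.Nat.antidiagonalTuple n d,
      ((ext c β - ext c' β) * sqC β) * ∏ i, t i ^ β i = 0 := by
    intro t
    have h1 := congrFun h (WithLp.toLp 2 t)
    rw [tF_eq, tF_eq] at h1
    have : ∑ β ∈ Finset.Nat.antidiagonalTuple n d,
        ((ext c β - ext c' β) * sqC β) * ∏ i, t i ^ β i
        = ∑ β ∈ Finset.Nat.antidiagonalTuple n d, (ext c β * sqC β * ∏ i, t i ^ β i)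
          - ∑ β ∈ Finset.Nat.antidiagonalTuple n d, (ext c' β * sqC β * ∏ i, t i ^ β i) := by
      rw [← Finset.sum_sub_distrib]
      exact Finset.sum_congr rfl fun β _ => by ring
    rw [this]; exact sub_eq_zero.2 h1
  have h2 := coeff_unique _ _ key
  ext α
  have := h2 α.1 α.2
  have hc : ext c α.1 = c α := by rw [ext, dif_pos α.2]
  have hc' : ext c' α.1 = c' α := by rw [ext, dif_pos α.2]
  rw [hc, hc'] at this
  have := mul_eq_zero.1 this
  rcases this with h3 | h3
  · linarith [sub_eq_zero.1 (by linarith : c α - c' α = 0)]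
  · exact absurd h3 (sqC_ne_zero _)

def S : HilbertFunSpace (EuclideanSpace ℝ (Fin n)) where
  carrier := Car n d
  toFun := tF
  add' f g := by
    funext t
    simp only [Pi.add_apply, tF]
    rw [← Finset.sum_add_distrib]
    exact Finset.sum_congr rfl fun α _ => by rw [PiLp.add_apply]; ring
  smul' a f := by
    funext t
    simp only [Pi.smul_apply, tF, smul_eq_mul]
    rw [Finset.mul_sum]
    exact Finset.sum_congr rfl fun α _ => by rw [PiLp.smul_apply, smul_eq_mul]; ring
  inj' := tF_inj

lemma S_toFun : (S : HilbertFunSpace (EuclideanSpace ℝ (Fin n))).toFun = tF (n := n) (d := d) := rfl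

end PolyRKHSAux

end PolyRKHSAux

open PolyRKHSAux

/-- the RKHS of `K(x,t) = ⟨x,t⟩^d` on `ℝⁿ` is the space `H_d(ℝⁿ)` of
homogeneous polynomials of degree `d`, with the Weyl inner product
`⟨∑_{|α|=d} w_α t^α, ∑_{|α|=d} v_α t^α⟩ = ∑_{|α|=d} w_α v_α / C^d_α`. -/
theorem polynomial_kernel_rkhs_is_weyl (n d : ℕ) :
    ∃ S : HilbertFunSpace (EuclideanSpace ℝ (Fin n)),
      S.IsRKHS (fun x t : EuclideanSpace ℝ (Fin n) => (⟪x, t⟫) ^ d) ∧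
      Set.range S.toFun = {f : EuclideanSpace ℝ (Fin n) → ℝ | ∃ w : (Fin n → ℕ) → ℝ,
        ∀ t : EuclideanSpace ℝ (Fin n),
          f t = ∑ α ∈ Finset.Nat.antidiagonalTuple n d, w α * ∏ i, t i ^ α i} ∧
      ∀ (w v : (Fin n → ℕ) → ℝ) (F G : S.carrier),
        (∀ t : EuclideanSpace ℝ (Fin n),
          S.toFun F t = ∑ α ∈ Finset.Nat.antidiagonalTuple n d, w α * ∏ i, t i ^ α i) →
        (∀ t : EuclideanSpace ℝ (Fin n),
          S.toFun G t = ∑ α ∈ Finset.Nat.antidiagonalTuple n d, v α * ∏ i, t i ^ α i) →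
        ⟪F, G⟫ = ∑ α ∈ Finset.Nat.antidiagonalTuple n d,
          w α * v α / (Nat.multinomial Finset.univ α : ℝ) := by
  refine ⟨S (n := n) (d := d), ?_, ?_, ?_⟩
  · -- RKHS property
    intro x
    refine ⟨(WithLp.toLp 2 (fun α : Idx n d => sqC α.1 * ∏ i, x i ^ α.1 i) : Car n d), ?_, ?_⟩
    · funext t
      rw [S_toFun]
      beta_reduce
      have hinner : (⟪x, t⟫ : ℝ) = ∑ i, x i * t i := by
        simp [PiLp.inner_apply, RCLike.inner_apply, conj_trivial]
        exact Finset.sum_congr rfl fun _ _ => mul_comm _ _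
      rw [hinner, Finset.sum_pow_eq_sum_piAntidiag,
        Finset.piAntidiag_univ_fin_eq_antidiagonalTuple]
      rw [tF, ← Finset.sum_coe_sort (Finset.Nat.antidiagonalTuple n d)
        (fun β => (Nat.multinomial Finset.univ β : ℝ) * ∏ i, (x i * t i) ^ β i)]
      refine Finset.sum_congr rfl fun α _ => ?_
      have : ∏ i, (x i * t i) ^ α.1 i = (∏ i, x i ^ α.1 i) * ∏ i, t i ^ α.1 i := by
        rw [← Finset.prod_mul_distrib]
        exact Finset.prod_congr rfl fun i _ => mul_pow _ _ _
      rw [this, ← sqC_mul_self α.1, PiLp.toLp_apply]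
      ring
    · intro f
      refine (inner_eq (n := n) (d := d) f _).trans ?_
      rw [S_toFun]
      unfold tF
      exact Finset.sum_congr rfl fun α _ => by rw [PiLp.toLp_apply (p := 2)]; ring
  · -- range
    ext f
    constructor
    · rintro ⟨c, rfl⟩
      refine ⟨fun β => ext c β * sqC β, fun t => ?_⟩
      rw [S_toFun]
      exact tF_eq _ _
    · rintro ⟨w, hw⟩
      refine ⟨(WithLp.toLp 2 (fun α : Idx n d => w α.1 / sqC α.1) : Car n d), ?_⟩
      funext t
      rw [S_toFun]
      rw [hw t, tF, ← Finset.sum_coe_sort (Finset.Nat.antidiagonalTuple n d)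
        (fun β => w β * ∏ i, t i ^ β i)]
      refine Finset.sum_congr rfl fun α _ => ?_
      rw [PiLp.toLp_apply, div_mul_cancel₀ _ (sqC_ne_zero α.1)]
  · -- inner product formula
    intro w v F G hF hG
    have hFc : F = (WithLp.toLp 2 (fun α : Idx n d => w α.1 / sqC α.1) : Car n d) := by
      apply tF_inj
      funext t
      rw [show tF F t = _ from (S_toFun (n:=n) (d:=d)) ▸ hF t, tF, ← Finset.sum_coe_sort (Finset.Nat.antidiagonalTuple n d)
        (fun β => w β * ∏ i, t i ^ β i)]
      refine Finset.sum_congr rfl fun α _ => ?_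
      rw [PiLp.toLp_apply, div_mul_cancel₀ _ (sqC_ne_zero α.1)]
    have hGc : G = (WithLp.toLp 2 (fun α : Idx n d => v α.1 / sqC α.1) : Car n d) := by
      apply tF_inj
      funext t
      rw [show tF G t = _ from (S_toFun (n:=n) (d:=d)) ▸ hG t, tF, ← Finset.sum_coe_sort (Finset.Nat.antidiagonalTuple n d)
        (fun β => v β * ∏ i, t i ^ β i)]
      refine Finset.sum_congr rfl fun α _ => ?_
      rw [PiLp.toLp_apply, div_mul_cancel₀ _ (sqC_ne_zero α.1)]
    rw [hFc, hGc]
    refine (inner_eq (n := n) (d := d) _ _).trans ?_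
    rw [← Finset.sum_coe_sort (Finset.Nat.antidiagonalTuple n d)
      (fun β => w β * v β / (Nat.multinomial Finset.univ β : ℝ))]
    refine Finset.sum_congr rfl fun α _ => ?_
    rw [PiLp.toLp_apply, PiLp.toLp_apply, div_mul_div_comm, sqC_mul_self]
end

section
/- Let n ∈ ℕ, σ > 0, μ ∈ ℝ with 0 < μ < 2, and c = (c₁,…,cₙ) ∈ ℝⁿ. Suppose that for each i the one-dimensional expansion exp(-(μ-1)(x_i-c_i)²/σ²) = ∑_{k=0}^∞ w_k (x_i-c_i)^k holds with w_{2k} = (-1)^k(μ-1)^k/(σ^{2k} k!) and w_j = 0 for odd j. Then ∑_{(k₁,…,kₙ) ∈ ℕⁿ} ∏_{i=1}^n (σ^{2k_i} k_i!/2^{k_i}) w_{k_i}² = ∏_{i=1}^n ( ∑_{k=0}^∞ (σ^{2k} k!/2^k) w_k² ) = (1/(μ(2-μ)))^{n/2}, all series converging. -/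
open Real Set

lemma mdnp_centralBinom_le (m : ℕ) : (Nat.centralBinom m : ℝ) ≤ 4 ^ m := by
  have h : Nat.centralBinom m ≤ 4 ^ m := by
    calc Nat.centralBinom m = (2*m).choose m := rfl
      _ ≤ ∑ k ∈ Finset.range (2*m+1), (2*m).choose k :=
          Finset.single_le_sum (f := fun k => (2*m).choose k) (fun i _ => Nat.zero_le _)
            (Finset.mem_range.mpr (by omega))
      _ = 2 ^ (2*m) := Nat.sum_range_choose (2*m)
      _ = 4 ^ m := by rw [pow_mul]; norm_num
  exact_mod_cast h

lemma mdnp_a_rec (m : ℕ) :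
    2 * ((m:ℝ)+1) * ((Nat.centralBinom (m+1) : ℝ) / 4 ^ (m+1))
      = (2*(m:ℝ)+1) * ((Nat.centralBinom m : ℝ) / 4 ^ m) := by
  have h := Nat.succ_mul_centralBinom_succ m
  have h' : ((m:ℝ)+1) * (Nat.centralBinom (m+1) : ℝ)
      = 2 * (2*(m:ℝ)+1) * (Nat.centralBinom m : ℝ) := by exact_mod_cast h
  have h4 : (4:ℝ) ^ (m+1) = 4 * 4 ^ m := by ring
  field_simp [h4]
  linear_combination (2 * (4:ℝ) ^ m) * h'

lemma mdnp_key {x : ℝ} (hx0 : 0 ≤ x) (hx1 : x < 1) :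
    HasSum (fun m : ℕ => (Nat.centralBinom m : ℝ) / 4 ^ m * x ^ m)
      (Real.sqrt (1/(1-x))) := by
  set a : ℕ → ℝ := fun m => (Nat.centralBinom m : ℝ) / 4 ^ m with ha
  have ha_nonneg : ∀ m, 0 ≤ a m := fun m => by positivity
  have ha_le : ∀ m, a m ≤ 1 := fun m => by
    rw [ha, div_le_one (by positivity)]; exact mdnp_centralBinom_le m
  set r : ℝ := (1+x)/2 with hr
  have hr0 : 0 < r := by rw [hr]; linarith
  have hr1 : r < 1 := by rw [hr]; linarith
  have hxr : x < r := by rw [hr]; linarith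
  set t : Set ℝ := Ioo (-r) r with ht
  have ht_open : IsOpen t := isOpen_Ioo
  have ht_conn : IsPreconnected t := (convex_Ioo _ _).isPreconnected
  have h0t : (0:ℝ) ∈ t := by constructor <;> simp [hr0] <;> linarith
  -- summable bound for derivatives
  set u : ℕ → ℝ := fun m => (m:ℝ) * r ^ (m-1) with hu_def
  have hu : Summable u := by
    rw [← summable_nat_add_iff 1]
    have h1 : Summable (fun m : ℕ => (m:ℝ) ^ 1 * r ^ m) :=
      summable_pow_mul_geometric_of_norm_lt_one 1 (by rw [Real.norm_eq_abs, abs_of_pos hr0]; exact hr1)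
    have h2 : Summable (fun m : ℕ => r ^ m) :=
      summable_geometric_of_lt_one hr0.le hr1
    have := h1.add h2
    apply this.congr
    intro m
    simp [hu_def]
    push_cast
    ring
  set g : ℕ → ℝ → ℝ := fun m y => a m * y ^ m with hg_def
  set g' : ℕ → ℝ → ℝ := fun m y => a m * ((m:ℝ) * y ^ (m-1)) with hg'_def
  have hg : ∀ m y, y ∈ t → HasDerivAt (g m) (g' m y) y := fun m y _ =>
    (hasDerivAt_pow m y).const_mul (a m)
  have hbound : ∀ m y, y ∈ t → ‖g' m y‖ ≤ u m := by
    intro m y hy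
    have hy' : |y| ≤ r := by
      rw [abs_le]; exact ⟨hy.1.le, hy.2.le⟩
    rw [hg'_def, hu_def]
    simp only [norm_mul, Real.norm_eq_abs]
    calc |a m| * (|(m:ℝ)| * |y ^ (m-1)|)
        ≤ 1 * ((m:ℝ) * r ^ (m-1)) := by
          apply mul_le_mul
          · rw [abs_of_nonneg (ha_nonneg m)]; exact ha_le m
          · apply mul_le_mul
            · simp
            · rw [abs_pow]; exact pow_le_pow_left₀ (abs_nonneg y) hy' _
            · positivity
            · positivity
          · positivity
          · norm_num
      _ = (m:ℝ) * r ^ (m-1) := by ring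
  have hg0 : Summable (fun m => g m 0) := by
    apply summable_of_ne_finset_zero (s := {0})
    intro m hm
    simp only [Finset.mem_singleton] at hm
    simp [hg_def, zero_pow hm]
  -- summability and derivative of G on t
  have hsumm : ∀ y ∈ t, Summable (fun m => g m y) := fun y hy =>
    summable_of_summable_hasDerivAt_of_isPreconnected hu ht_open ht_conn hg hbound h0t hg0 hy
  set G : ℝ → ℝ := fun y => ∑' m, g m y with hG_def
  have hderiv : ∀ y ∈ t, HasDerivAt G (∑' m, g' m y) y := fun y hy =>
    hasDerivAt_tsum_of_isPreconnected hu ht_open ht_conn hg hbound h0t hg0 hy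
  have hsumm' : ∀ y ∈ t, Summable (fun m => g' m y) := fun y hy =>
    Summable.of_norm_bounded hu (fun m => hbound m y hy)
  -- the ODE identity: 2*(1-y) * D y = G y on t
  have hident : ∀ y ∈ t, 2 * (1-y) * (∑' m, g' m y) = G y := by
    intro y hy
    have hD := hsumm' y hy
    have hshift : Summable (fun m => g' (m+1) y) :=
      (summable_nat_add_iff (f := fun m => g' m y) 1).2 hD
    have e1 : (∑' m, g' m y) = ∑' m, g' (m+1) y := by
      rw [Summable.tsum_eq_zero_add hD]
      simp [hg'_def]
    have hmul : Summable (fun m => a m * ((m:ℝ) * y ^ m)) := by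
      apply (hD.mul_right y).congr
      intro m
      rcases Nat.eq_zero_or_pos m with h | h
      · simp [h, hg'_def]
      · have hpow : y ^ (m-1) * y = y ^ m := by
          rw [← pow_succ]; congr 1; omega
        show a m * ((m:ℝ) * y ^ (m-1)) * y = a m * ((m:ℝ) * y ^ m)
        rw [← hpow]; ring
    have e2 : (∑' m, g' m y) * y = ∑' m, a m * ((m:ℝ) * y ^ m) := by
      rw [← tsum_mul_right]
      apply tsum_congr
      intro m
      rcases Nat.eq_zero_or_pos m with h | h
      · simp [h, hg'_def]
      · have hpow : y ^ (m-1) * y = y ^ m := by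
          rw [← pow_succ]; congr 1; omega
        show a m * ((m:ℝ) * y ^ (m-1)) * y = a m * ((m:ℝ) * y ^ m)
        rw [← hpow]; ring
    have lhs_eq : 2 * (1-y) * (∑' m, g' m y)
        = 2 * (∑' m, g' (m+1) y) - 2 * (∑' m, a m * ((m:ℝ) * y ^ m)) := by
      rw [← e1, ← e2]; ring
    rw [lhs_eq, ← tsum_mul_left, ← tsum_mul_left,
        ← Summable.tsum_sub ((hshift).mul_left 2) ((hmul).mul_left 2)]
    apply tsum_congr
    intro m
    have hrec := mdnp_a_rec m
    simp only [hg'_def, hg_def, Nat.add_sub_cancel, Nat.cast_add, Nat.cast_one]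
    have : 2 * (a (m+1) * (((m:ℝ)+1) * y ^ m)) - 2 * (a m * ((m:ℝ) * y ^ m))
        = (2 * ((m:ℝ)+1) * a (m+1) - 2 * (m:ℝ) * a m) * y ^ m := by ring
    rw [this, hrec]
    ring
  -- F := G^2 * (1-z) has zero derivative on t
  set F : ℝ → ℝ := fun z => (G z)^2 * (1 - z) with hF_def
  have hFderiv : ∀ y ∈ t, HasDerivAt F 0 y := by
    intro y hy
    have h1 := (hderiv y hy).pow 2
    have h2 : HasDerivAt (fun z => 1 - z) (-1) y := by
      simpa using (hasDerivAt_id y).const_sub 1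
    have h3 := h1.mul h2
    have h4 : ((2:ℕ):ℝ) * G y ^ (2-1) * (∑' m, g' m y) * (1 - y) + G y ^ 2 * (-1) = 0 := by
      have hi := hident y hy
      push_cast
      norm_num
      linear_combination (G y) * hi
    rw [Pi.pow_apply, h4] at h3
    exact h3
  have hxt : x ∈ t := ⟨by linarith, hxr⟩
  have hsub : Icc (0:ℝ) x ⊆ t := fun z hz =>
    ⟨by have h1 := hz.1; linarith, lt_of_le_of_lt hz.2 hxr⟩
  have hcont : ContinuousOn F (Icc 0 x) := fun z hz =>
    ((hFderiv z (hsub hz)).continuousAt).continuousWithinAt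
  have hFx : F x = F 0 :=
    constant_of_has_deriv_right_zero hcont
      (fun z hz => ((hFderiv z (hsub (Ico_subset_Icc_self hz))).hasDerivWithinAt))
      x (right_mem_Icc.mpr hx0)
  have hG0 : G 0 = 1 := by
    show (∑' m, g m 0) = 1
    rw [tsum_eq_single 0 (by intro m hm; simp [hg_def, zero_pow hm])]
    simp [hg_def, ha]
  have hF0 : F 0 = 1 := by
    show G 0 ^ 2 * (1 - 0) = 1
    rw [hG0]; norm_num
  have hGx2 : (G x)^2 * (1-x) = 1 := by
    have h := hFx
    rw [hF0] at h
    exact h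
  have h1x : 0 < 1 - x := by linarith
  have hGx_nonneg : 0 ≤ G x :=
    tsum_nonneg (fun m => mul_nonneg (ha_nonneg m) (pow_nonneg hx0 m))
  have hGxsq : (G x)^2 = 1/(1-x) := by
    rw [eq_div_iff h1x.ne']; linarith [hGx2]
  have hGx : G x = Real.sqrt (1/(1-x)) := by
    rw [← hGxsq, Real.sqrt_sq hGx_nonneg]
  have hfinal : HasSum (fun m => g m x) (G x) := (hsumm x hxt).hasSum
  rw [hGx] at hfinal
  exact hfinal


lemma mdnp_pi_hasSum {f : ℕ → ℝ} (hf0 : ∀ k, 0 ≤ f k) {S : ℝ} (hf : HasSum f S) :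
    ∀ n : ℕ, HasSum (fun K : Fin n → ℕ => ∏ i, f (K i)) (S ^ n) := by
  intro n
  induction n with
  | zero =>
      rw [pow_zero]
      have h0 : ∀ (K : Fin 0 → ℕ), K ≠ (fun i => i.elim0) → (∏ i, f (K i)) = 0 := by
        intro K hK
        exact absurd (Subsingleton.elim K _) hK
      have := hasSum_single (f := fun K : Fin 0 → ℕ => ∏ i, f (K i)) (fun i => i.elim0) h0
      simpa using this
  | succ n ih =>
      have hmulsum : Summable (fun p : ℕ × (Fin n → ℕ) =>
          f p.1 * (fun K : Fin n → ℕ => ∏ i, f (K i)) p.2) := by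
        apply Summable.mul_of_nonneg hf.summable ih.summable
        · intro k; exact hf0 k
        · intro K; exact Finset.prod_nonneg (fun i _ => hf0 (K i))
      have key : HasSum (fun p : ℕ × (Fin n → ℕ) => f p.1 * ∏ i, f (p.2 i)) (S * S ^ n) :=
        HasSum.mul (f := f) (g := fun K : Fin n → ℕ => ∏ i, f (K i)) hf ih hmulsum
      have hps : S ^ (n+1) = S * S ^ n := by ring
      rw [hps, ← Equiv.hasSum_iff (Fin.consEquiv (fun _ : Fin (n+1) => ℕ))]
      have hcomp : ((fun K : Fin (n+1) → ℕ => ∏ i, f (K i))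
            ∘ (Fin.consEquiv (fun _ : Fin (n+1) => ℕ)))
          = fun p : ℕ × (Fin n → ℕ) => f p.1 * ∏ i, f (p.2 i) := by
        funext p
        simp only [Function.comp_apply, Fin.consEquiv_apply]
        rw [Fin.prod_univ_succ]
        simp [Fin.cons_zero, Fin.cons_succ]
      rw [hcomp]
      exact key


/-- if `exp(-(μ-1)(x_i-c_i)²/σ²) = ∑_k w_k (x_i-c_i)^k` with
`w_{2k} = (-1)^k(μ-1)^k/(σ^{2k}k!)` and `w_j = 0` for odd `j`, then
`∑_{(k₁,…,kₙ)} ∏_i (σ^{2k_i}k_i!/2^{k_i}) w_{k_i}² = ∏_i (∑_k (σ^{2k}k!/2^k) w_k²)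
 = (1/(μ(2-μ)))^{n/2}`, all series converging. -/
theorem multi_dim_norm_product (n : ℕ) (σ μ : ℝ) (hσ : 0 < σ) (hμ0 : 0 < μ) (hμ2 : μ < 2)
    (c : EuclideanSpace ℝ (Fin n)) (w : ℕ → ℝ)
    (hexp : ∀ (i : Fin n) (x : ℝ),
      HasSum (fun k : ℕ => w k * (x - c i) ^ k)
        (Real.exp (-((μ - 1) * (x - c i) ^ 2) / σ ^ 2)))
    (hw_even : ∀ k : ℕ, w (2 * k) = (-1) ^ k * (μ - 1) ^ k / (σ ^ (2 * k) * (k.factorial : ℝ)))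
    (hw_odd : ∀ j : ℕ, Odd j → w j = 0) :
    Summable (fun K : Fin n → ℕ =>
      ∏ i, σ ^ (2 * K i) * ((K i).factorial : ℝ) / 2 ^ (K i) * w (K i) ^ 2) ∧
    Summable (fun k : ℕ => σ ^ (2 * k) * (k.factorial : ℝ) / 2 ^ k * w k ^ 2) ∧
    (∑' K : Fin n → ℕ, ∏ i, σ ^ (2 * K i) * ((K i).factorial : ℝ) / 2 ^ (K i) * w (K i) ^ 2)
      = (∏ _i : Fin n, ∑' k : ℕ, σ ^ (2 * k) * (k.factorial : ℝ) / 2 ^ k * w k ^ 2) ∧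
    (∏ _i : Fin n, ∑' k : ℕ, σ ^ (2 * k) * (k.factorial : ℝ) / 2 ^ k * w k ^ 2)
      = (1 / (μ * (2 - μ))) ^ ((n : ℝ) / 2) := by
  have hx0 : (0:ℝ) ≤ (μ - 1)^2 := sq_nonneg _
  have hx1 : (μ - 1)^2 < 1 := by nlinarith
  set x : ℝ := (μ - 1)^2 with hx_def
  have h1mx : 1 - x = μ * (2 - μ) := by rw [hx_def]; ring
  set f : ℕ → ℝ := fun k => σ ^ (2 * k) * (k.factorial : ℝ) / 2 ^ k * w k ^ 2 with hf_def
  have hf_nonneg : ∀ k, 0 ≤ f k := fun k => by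
    have h2 : (0:ℝ) < 2 ^ k := by positivity
    apply mul_nonneg
    · positivity
    · positivity
  -- f at even indices
  have hf_even : ∀ m : ℕ, f (2 * m) = (Nat.centralBinom m : ℝ) / 4 ^ m * x ^ m := by
    intro m
    show σ ^ (2 * (2*m)) * ((2*m).factorial : ℝ) / 2 ^ (2*m) * w (2*m) ^ 2
      = (Nat.centralBinom m : ℝ) / 4 ^ m * x ^ m
    rw [hw_even m]
    have hCB : ((2*m).factorial : ℝ)
        = (Nat.centralBinom m : ℝ) * (m.factorial : ℝ) * (m.factorial : ℝ) := by
      have h := Nat.choose_mul_factorial_mul_factorial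
        (show m ≤ 2*m by omega)
      have h2 : 2*m - m = m := by omega
      rw [h2] at h
      rw [Nat.centralBinom]
      exact_mod_cast h.symm
    have h1 : (σ:ℝ) ^ (2*(2*m)) = (σ ^ (2*m))^2 := by
      rw [← pow_mul]; ring_nf
    have h2 : ((2:ℝ)) ^ (2*m) = 4 ^ m := by
      rw [pow_mul]; norm_num
    have h3 : x ^ m = ((μ-1)^m)^2 := by
      rw [hx_def, ← pow_mul, ← pow_mul, mul_comm]
    have h4 : (((-1:ℝ))^m)^2 = 1 := by
      rw [← pow_mul, mul_comm, pow_mul]; norm_num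
    have hσ2 : (σ:ℝ) ^ (2*m) ≠ 0 := by positivity
    have hfact : ((m.factorial : ℝ)) ≠ 0 := by positivity
    have h4m : ((4:ℝ)) ^ m ≠ 0 := by positivity
    rw [hCB, h1, h2, h3, div_pow, mul_pow, h4]
    field_simp
  -- f vanishes off the even indices
  have hf_vanish : ∀ k ∉ Set.range (fun m : ℕ => 2 * m), f k = 0 := by
    intro k hk
    have hodd : Odd k := by
      rcases Nat.even_or_odd k with he | ho
      · obtain ⟨m, hm⟩ := he
        exact absurd (Set.mem_range.mpr ⟨m, by omega⟩) hk
      · exact ho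
    show σ ^ (2 * k) * (k.factorial : ℝ) / 2 ^ k * w k ^ 2 = 0
    rw [hw_odd k hodd]
    ring
  -- the one-dimensional sum
  set S : ℝ := Real.sqrt (1 / (μ * (2 - μ))) with hS_def
  have h1d : HasSum f S := by
    have hkey := mdnp_key hx0 hx1
    rw [h1mx] at hkey
    have hinj : Function.Injective (fun m : ℕ => 2 * m) := fun a b h => by
      simp only at h; omega
    have hcomp : (f ∘ fun m : ℕ => 2 * m) = fun m => (Nat.centralBinom m : ℝ) / 4 ^ m * x ^ m :=
      funext hf_even
    rw [← Function.Injective.hasSum_iff hinj hf_vanish, hcomp]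
    exact hkey
  have hpi := mdnp_pi_hasSum hf_nonneg h1d n
  have hc0 : (0:ℝ) ≤ 1 / (μ * (2 - μ)) := by
    have : 0 < μ * (2 - μ) := by nlinarith
    positivity
  refine ⟨hpi.summable, h1d.summable, ?_, ?_⟩
  · rw [hpi.tsum_eq, h1d.tsum_eq, Finset.prod_const, Finset.card_univ, Fintype.card_fin]
  · rw [h1d.tsum_eq, Finset.prod_const, Finset.card_univ, Fintype.card_fin, hS_def,
      Real.sqrt_eq_rpow, ← Real.rpow_natCast ((1 / (μ * (2 - μ))) ^ ((1:ℝ)/2)) n,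
      ← Real.rpow_mul hc0]
    congr 1
    ring
end
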